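/- arXiv:2510.08185 — 4 statements merged into one kernel-verified Lean document; each statement's English description precedes it below -/
import Mathlib

section
/- Let u and m be powers of two with m < u and set r = u·m. Then the Dietzfelbinger family H_{u,m} is pairwise independent: for all distinct x1, x2 ∈ {0,...,u−1} and all y1, y2 ∈ {0,...,m−1}, the number of pairs (a,b) ∈ {0,...,r−1}² with h_{a,b}(x1) = y1 and h_{a,b}(x2) = y2 equals r²/m². Equivalently, for a uniformly random (a,b), the probability that h_{a,b}(x1) = y1 and h_{a,b}(x2) = y2 is exactly 1/m². -/
open Finset

lemma DZ.sum_range_mul (f : ℕ → ℕ) (k n : ℕ) :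
    ∑ j ∈ range (k*n), f j = ∑ q ∈ range k, ∑ t ∈ range n, f (q*n+t) := by
  induction k with
  | zero => simp
  | succ k ih =>
    rw [Nat.succ_mul, Finset.range_eq_Ico,
      ← Finset.sum_Ico_consecutive _ (Nat.zero_le _) (Nat.le_add_right _ _),
      ← Finset.range_eq_Ico, ih, Finset.sum_range_succ]
    congr 1
    rw [Finset.sum_Ico_eq_sum_range]
    simp

lemma DZ.sum_shift (n z : ℕ) (hn : 0 < n) (f : ℕ → ℕ) :
    ∑ b ∈ range n, f ((z+b) % n) = ∑ v ∈ range n, f v := by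
  have hz : z % n < n := Nat.mod_lt _ hn
  have hzz : z - z % n = n * (z/n) := by have := Nat.div_add_mod z n; omega
  refine Finset.sum_nbij' (fun b => (z+b) % n) (fun v => (v + (n - z % n)) % n) ?_ ?_ ?_ ?_ ?_
  · intro b _; exact Finset.mem_range.mpr (Nat.mod_lt _ hn)
  · intro v _; exact Finset.mem_range.mpr (Nat.mod_lt _ hn)
  · intro b hb
    have hb' := Finset.mem_range.mp hb
    show ((z+b) % n + (n - z % n)) % n = b
    rw [Nat.mod_add_mod]
    have h2 := Nat.div_add_mod z n
    have h1 : z + b + (n - z % n) = n * (z/n) + (b + n) := by omega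
    rw [h1, Nat.mul_add_mod, Nat.add_mod_right, Nat.mod_eq_of_lt hb']
  · intro v hv
    have hv' := Finset.mem_range.mp hv
    show (z + (v + (n - z % n)) % n) % n = v
    rw [Nat.add_mod_mod]
    have h2 := Nat.div_add_mod z n
    have h1 : z + (v + (n - z % n)) = n * (z/n) + (v + n) := by omega
    rw [h1, Nat.mul_add_mod, Nat.add_mod_right, Nat.mod_eq_of_lt hv']
  · intro b _; rfl

lemma DZ.sum_mul_mod (n d e : ℕ) (hn : 0 < n) (h : d * e % n = 1) (f : ℕ → ℕ) :
    ∑ t ∈ range n, f ((t*d) % n) = ∑ j ∈ range n, f j := by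
  refine Finset.sum_nbij' (fun t => (t*d) % n) (fun v => (v*e) % n) ?_ ?_ ?_ ?_ ?_
  · intro b _; exact Finset.mem_range.mpr (Nat.mod_lt _ hn)
  · intro v _; exact Finset.mem_range.mpr (Nat.mod_lt _ hn)
  · intro b hb
    have hb' := Finset.mem_range.mp hb
    show ((b*d) % n * e) % n = b
    rw [Nat.mod_mul_mod, mul_assoc, Nat.mul_mod, h, mul_one, Nat.mod_mod_of_dvd,
      Nat.mod_eq_of_lt hb']
    exact dvd_refl n
  · intro v hv
    have hv' := Finset.mem_range.mp hv
    show ((v*e) % n * d) % n = v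
    rw [Nat.mod_mul_mod, mul_assoc, Nat.mul_mod, mul_comm e d, h, mul_one,
      Nat.mod_mod_of_dvd, Nat.mod_eq_of_lt hv']
    exact dvd_refl n
  · intro b _; rfl

/-- `((k*u + w) % (u*m)) / u = k % m` for `w < u`. -/
lemma DZ.mod_div (u m k w : ℕ) (hu : 0 < u) (hm : 0 < m) (hw : w < u) :
    ((k*u + w) % (u*m)) / u = k % m := by
  have hkm : k % m < m := Nat.mod_lt _ hm
  have h1 : k*u + w = (u*m)*(k/m) + ((k%m)*u + w) := by
    have h2 := Nat.div_add_mod k m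
    nlinarith [h2]
  rw [h1, Nat.mul_add_mod, Nat.mod_eq_of_lt (by nlinarith),
    mul_comm (k % m) u, Nat.mul_add_div hu, Nat.div_eq_of_lt hw, Nat.add_zero]

lemma DZ.single (m z y1 : ℕ) (hm : 0 < m) (hy1 : y1 < m) :
    ∑ q ∈ range m, (if (z+q) % m = y1 then 1 else 0) = 1 := by
  rw [DZ.sum_shift m z hm (fun v => if v = y1 then 1 else 0)]
  rw [Finset.sum_ite_eq' (range m) y1 (fun _ => 1)]
  simp [hy1]

lemma DZ.stepB (u m qc s y1 y2 : ℕ) (hu : 0 < u) (hm : 0 < m) (hy2 : y2 < m)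
    (hs : s < u) :
    ∑ v ∈ range (u*m), (if ((v + (u*qc+s)) % (u*m))/u = y1 ∧ v/u = y2 then 1 else 0)
    = (u - s) * (if (y2 + qc) % m = y1 then 1 else 0)
      + s * (if (y2 + qc + 1) % m = y1 then 1 else 0) := by
  set c := u*qc + s with hcdef
  have hmain := DZ.sum_range_mul (fun v => if ((v + c) % (u*m))/u = y1 ∧ v/u = y2 then 1 else 0) m u
  rw [mul_comm m u] at hmain
  rw [hmain]
  have h1 : ∀ q ∈ range m, (∑ t ∈ range u,
      (if ((q*u+t + c) % (u*m))/u = y1 ∧ (q*u+t)/u = y2 then 1 else 0))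
      = if q = y2 then (∑ t ∈ range u,
          (if (y2 + qc + (t+s)/u) % m = y1 then 1 else 0)) else 0 := by
    intro q hq
    by_cases hqy : q = y2
    · subst hqy
      simp only [if_pos rfl]
      refine Finset.sum_congr rfl ?_
      intro t ht
      have ht' := Finset.mem_range.mp ht
      have hdiv : (q*u+t)/u = q := by
        rw [mul_comm q u, Nat.mul_add_div hu, Nat.div_eq_of_lt ht', Nat.add_zero]
      have hkey : q*u + t + c = (q + qc + (t+s)/u)*u + (t+s) % u := by
        have e2 := Nat.div_add_mod (t+s) u
        have e3 : (q + qc + (t+s)/u)*u = q*u + u*qc + u*((t+s)/u) := by ring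
        omega
      rw [hkey, DZ.mod_div u m _ _ hu hm (Nat.mod_lt _ hu)]
      simp [hdiv]
    · rw [if_neg hqy]
      refine Finset.sum_eq_zero ?_
      intro t ht
      have ht' := Finset.mem_range.mp ht
      have hdiv : (q*u+t)/u = q := by
        rw [mul_comm q u, Nat.mul_add_div hu, Nat.div_eq_of_lt ht', Nat.add_zero]
      rw [if_neg]
      rw [hdiv]
      tauto
  rw [Finset.sum_congr rfl h1]
  rw [Finset.sum_ite_eq' (range m) y2
    (fun _ => ∑ t ∈ range u, (if (y2 + qc + (t+s)/u) % m = y1 then 1 else 0))]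
  rw [if_pos (Finset.mem_range.mpr hy2)]
  rw [Finset.range_eq_Ico, ← Finset.sum_Ico_consecutive _ (Nat.zero_le (u-s)) (Nat.sub_le u s)]
  have hfirst : ∑ t ∈ Finset.Ico 0 (u-s), (if (y2 + qc + (t+s)/u) % m = y1 then 1 else 0)
      = (u - s) * (if (y2 + qc) % m = y1 then 1 else 0) := by
    rw [Finset.sum_congr rfl (fun t ht => ?_), Finset.sum_const, Nat.card_Ico, Nat.sub_zero,
      smul_eq_mul]
    have ht' := (Finset.mem_Ico.mp ht).2
    rw [Nat.div_eq_of_lt (by omega), Nat.add_zero]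
  have hsecond : ∑ t ∈ Finset.Ico (u-s) u, (if (y2 + qc + (t+s)/u) % m = y1 then 1 else 0)
      = s * (if (y2 + qc + 1) % m = y1 then 1 else 0) := by
    rw [Finset.sum_Ico_eq_sum_range]
    have hd : u - (u - s) = s := by omega
    rw [hd]
    rw [Finset.sum_congr rfl (fun i hi => ?_), Finset.sum_const, Finset.card_range, smul_eq_mul]
    have hi' := Finset.mem_range.mp hi
    have heq : (u - s + i + s)/u = 1 := by
      have h2 : u - s + i + s = i + u := by omega
      rw [h2, Nat.add_div_right i hu, Nat.div_eq_of_lt (lt_trans hi' hs)]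
    rw [heq]
  rw [hfirst, hsecond]

/-- the per-`a` count as a function of `c = (a*(x1-x2)) % (u*m)` -/
def DZ.F (u m y1 y2 c : ℕ) : ℕ :=
  (u - c % u) * (if (y2 + c/u) % m = y1 then 1 else 0)
    + (c % u) * (if (y2 + c/u + 1) % m = y1 then 1 else 0)

lemma DZ.stepB' (u m c y1 y2 : ℕ) (hu : 0 < u) (hm : 0 < m) (hy2 : y2 < m) :
    ∑ v ∈ range (u*m), (if ((v + c) % (u*m))/u = y1 ∧ v/u = y2 then 1 else 0)
    = DZ.F u m y1 y2 c := by
  have h := DZ.stepB u m (c/u) (c%u) y1 y2 hu hm hy2 (Nat.mod_lt _ hu)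
  rw [Nat.div_add_mod] at h
  exact h

lemma DZ.key (u m : ℕ) (hu : ∃ i, u = 2 ^ i) (hm : ∃ j, m = 2 ^ j) (hmu : m < u)
    (x1 x2 : ℕ) (hx1 : x1 < u) (hlt : x2 < x1)
    (y1 y2 : ℕ) (hy1 : y1 < m) (hy2 : y2 < m) :
    (((Finset.range (u * m)) ×ˢ (Finset.range (u * m))).filter
      (fun p => ((p.1 * x1 + p.2) % (u * m)) / u = y1 ∧
                ((p.1 * x2 + p.2) % (u * m)) / u = y2)).card = u * u := by
  obtain ⟨i, hui⟩ := hu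
  obtain ⟨j, hmj⟩ := hm
  have hu0 : 0 < u := by rw [hui]; positivity
  have hm0 : 0 < m := by rw [hmj]; positivity
  have hr0 : 0 < u * m := Nat.mul_pos hu0 hm0
  rw [Finset.card_filter, Finset.sum_product]
  -- Step A+B : per-a evaluation
  have hAB : ∀ a ∈ range (u*m),
      (∑ b ∈ range (u*m), if ((a * x1 + b) % (u * m)) / u = y1 ∧
          ((a * x2 + b) % (u * m)) / u = y2 then 1 else 0)
      = DZ.F u m y1 y2 ((a*(x1-x2)) % (u*m)) := by
    intro a _
    rw [← DZ.stepB' u m ((a*(x1-x2)) % (u*m)) y1 y2 hu0 hm0 hy2]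
    rw [← DZ.sum_shift (u*m) (a*x2) hr0
      (fun v => if ((v + (a*(x1-x2)) % (u*m)) % (u*m))/u = y1 ∧ v/u = y2 then 1 else 0)]
    refine Finset.sum_congr rfl ?_
    intro b _
    have h1 : ((a*x2+b) % (u*m) + (a*(x1-x2)) % (u*m)) % (u*m) = (a*x1+b) % (u*m) := by
      rw [← Nat.add_mod]
      congr 1
      rw [add_right_comm, ← Nat.mul_add]
      congr 2
      omega
    simp only [h1]
  rw [Finset.sum_congr rfl hAB]
  -- Step C : structure of the multiplier
  set d := x1 - x2 with hddef
  have hd0 : d ≠ 0 := by omega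
  have hdu : d < u := by omega
  obtain ⟨e, d', hodd, hdd⟩ := Nat.exists_eq_two_pow_mul_odd hd0
  have hd'0 : 0 < d' := hodd.pos
  have hpe : 0 < (2:ℕ)^e := by positivity
  have h2ed : 2^e ≤ d := by
    rw [hdd]; exact Nat.le_mul_of_pos_right _ hd'0
  have hei : e < i := by
    have : (2:ℕ)^e < 2^i := by omega
    exact (Nat.pow_lt_pow_iff_right (by norm_num)).mp this
  set u₂ := 2^(i-e) with hu2def
  have hu2 : u = 2^e * u₂ := by
    rw [hui, hu2def, ← pow_add]
    congr 1
    omega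
  have hu₂2 : 2 ≤ u₂ := by
    have : (2:ℕ)^1 ≤ 2^(i-e) := Nat.pow_le_pow_right (by norm_num) (by omega)
    simpa using this
  have hr2pos : 0 < u₂ * m := Nat.mul_pos (by omega) hm0
  have hmod : ∀ a, (a*d) % (u*m) = ((a*d') % (u₂*m)) * 2^e := by
    intro a
    have h1 : a*d = (a*d') * 2^e := by rw [hdd]; ring
    have h2 : u*m = (u₂*m) * 2^e := by rw [hu2]; ring
    rw [h1, h2, Nat.mul_mod_mul_right]
  have hrange : u*m = 2^e * (u₂*m) := by rw [hu2]; ring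
  simp only [hmod]
  rw [hrange, DZ.sum_range_mul (fun a => DZ.F u m y1 y2 ((a*d') % (u₂*m) * 2^e)) (2^e) (u₂*m)]
  have hperiod : ∀ q ∈ range (2^e), (∑ t ∈ range (u₂*m),
      DZ.F u m y1 y2 (((q*(u₂*m)+t)*d') % (u₂*m) * 2^e))
      = ∑ t ∈ range (u₂*m), DZ.F u m y1 y2 ((t*d') % (u₂*m) * 2^e) := by
    intro q _
    refine Finset.sum_congr rfl ?_
    intro t _
    have h1 : (q*(u₂*m)+t)*d' = t*d' + (u₂*m)*(q*d') := by ring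
    rw [h1, Nat.add_mul_mod_self_left]
  rw [Finset.sum_congr rfl hperiod, Finset.sum_const, Finset.card_range, smul_eq_mul]
  -- Step C2 : remove the odd multiplier by a bijection
  have hcop : Nat.Coprime d' (u₂*m) := by
    have hpow : u₂*m = 2^(i-e+j) := by rw [hu2def, hmj, pow_add]
    rw [hpow]
    exact Nat.Coprime.pow_right _ hodd.coprime_two_right
  have h1lt : 1 < u₂*m := by
    have : u₂ ≤ u₂*m := Nat.le_mul_of_pos_right _ hm0
    omega
  obtain ⟨w, -, hw⟩ := Nat.exists_mul_mod_eq_one_of_coprime hcop h1lt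
  rw [DZ.sum_mul_mod (u₂*m) d' w hr2pos hw (fun j => DZ.F u m y1 y2 (j * 2^e))]
  -- Step D : evaluate the remaining sum
  have hD := DZ.sum_range_mul (fun j => DZ.F u m y1 y2 (j * 2^e)) m u₂
  rw [mul_comm m u₂] at hD
  rw [hD]
  have hFval : ∀ q, ∀ t ∈ range u₂, DZ.F u m y1 y2 ((q*u₂+t) * 2^e)
      = (u - t*2^e) * (if (y2 + q) % m = y1 then 1 else 0)
        + (t*2^e) * (if (y2 + q + 1) % m = y1 then 1 else 0) := by
    intro q t ht
    have ht' := Finset.mem_range.mp ht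
    have hw' : t*2^e < u := by
      rw [hu2, mul_comm (2^e) u₂]
      exact (Nat.mul_lt_mul_right hpe).mpr ht'
    have hc : (q*u₂+t)*2^e = u*q + t*2^e := by rw [hu2]; ring
    rw [hc]
    unfold DZ.F
    rw [Nat.mul_add_mod, Nat.mod_eq_of_lt hw', Nat.mul_add_div hu0,
      Nat.div_eq_of_lt hw', Nat.add_zero]
  rw [Finset.sum_congr rfl (fun q _ => Finset.sum_congr rfl (hFval q))]
  have hinner : ∀ q ∈ range m, (∑ t ∈ range u₂,
      ((u - t*2^e) * (if (y2 + q) % m = y1 then 1 else 0)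
        + (t*2^e) * (if (y2 + q + 1) % m = y1 then 1 else 0)))
      = (∑ t ∈ range u₂, (u - t*2^e)) * (if (y2 + q) % m = y1 then 1 else 0)
        + (∑ t ∈ range u₂, t*2^e) * (if (y2 + q + 1) % m = y1 then 1 else 0) := by
    intro q _
    rw [Finset.sum_add_distrib, ← Finset.sum_mul, ← Finset.sum_mul]
  rw [Finset.sum_congr rfl hinner, Finset.sum_add_distrib, ← Finset.mul_sum, ← Finset.mul_sum]
  have hB' : ∀ q, (if (y2 + q + 1) % m = y1 then (1:ℕ) else 0)
      = if ((y2+1) + q) % m = y1 then 1 else 0 := by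
    intro q
    rw [Nat.add_right_comm y2 q 1]
  rw [Finset.sum_congr rfl (fun q _ => hB' q)]
  rw [DZ.single m y2 y1 hm0 hy1, DZ.single m (y2+1) y1 hm0 hy1, mul_one, mul_one]
  have hsum : (∑ t ∈ range u₂, (u - t*2^e)) + (∑ t ∈ range u₂, t*2^e) = u₂ * u := by
    rw [← Finset.sum_add_distrib]
    have : ∀ t ∈ range u₂, (u - t*2^e) + t*2^e = u := by
      intro t ht
      have ht' := Finset.mem_range.mp ht
      have : t*2^e < u := by
        rw [hu2, mul_comm (2^e) u₂]
        exact (Nat.mul_lt_mul_right hpe).mpr ht'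
      omega
    rw [Finset.sum_congr rfl this, Finset.sum_const, Finset.card_range, smul_eq_mul]
  rw [hsum, hu2]
  ring

/-- Dietzfelbinger's family `h_{a,b}(x) = ⌊((a·x + b) mod (u·m)) / u⌋` with
`u, m` powers of two, `m < u`, is pairwise independent: for distinct
`x1 x2 < u` and any `y1 y2 < m`, exactly `(u·m)²/m²` of the `(u·m)²` pairs
`(a, b)` satisfy `h_{a,b}(x1) = y1` and `h_{a,b}(x2) = y2`. -/
theorem stmt_3 (u m : ℕ) (hu : ∃ i, u = 2 ^ i) (hm : ∃ j, m = 2 ^ j) (hmu : m < u)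
    (x1 x2 : ℕ) (hx1 : x1 < u) (hx2 : x2 < u) (hne : x1 ≠ x2)
    (y1 y2 : ℕ) (hy1 : y1 < m) (hy2 : y2 < m) :
    (((Finset.range (u * m)) ×ˢ (Finset.range (u * m))).filter
      (fun p => ((p.1 * x1 + p.2) % (u * m)) / u = y1 ∧
                ((p.1 * x2 + p.2) % (u * m)) / u = y2)).card * m ^ 2 = (u * m) ^ 2 := by
  have hcard : (((Finset.range (u * m)) ×ˢ (Finset.range (u * m))).filter
      (fun p => ((p.1 * x1 + p.2) % (u * m)) / u = y1 ∧
                ((p.1 * x2 + p.2) % (u * m)) / u = y2)).card = u * u := by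
    rcases Nat.lt_or_ge x2 x1 with h | h
    · exact DZ.key u m hu hm hmu x1 x2 hx1 h y1 y2 hy1 hy2
    · have hlt : x1 < x2 := by omega
      have hswap := DZ.key u m hu hm hmu x2 x1 hx2 hlt y2 y1 hy2 hy1
      rw [← hswap]
      congr 1
      apply Finset.filter_congr
      intro p _
      constructor <;> exact fun h => ⟨h.2, h.1⟩
  rw [hcard]
  ring
end

section
/- Let u and m be powers of two with m < u and set r = u·m. Then for every real δ > 0, every nonempty set S ⊆ {0,...,u−1}, and every y ∈ {0,...,m−1}, the number of pairs (a,b) ∈ {0,...,r−1}² such that |{x ∈ S : h_{a,b}(x) = y}| ≥ (1+δ)·|S|/m is at most r²·m/(δ²·|S|). Equivalently, for a uniformly random (a,b), the probability that the load of bucket y on S is at least (1+δ)·|S|/m is at most m/(δ²·|S|). -/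
open scoped Classical

open Finset

/-- A map `range r → range r` that is injective induces equal filter cardinalities. -/
private lemma bijCount (r : ℕ) (f : ℕ → ℕ) (hf : ∀ b < r, f b < r)
    (hinj : ∀ b < r, ∀ b' < r, f b = f b' → b = b')
    (P : ℕ → Prop) [DecidablePred P] :
    ((range r).filter (fun b => P (f b))).card = ((range r).filter P).card := by
  have hinjOn : Set.InjOn f (range r) := fun b hb b' hb' h =>
    hinj b (mem_range.1 hb) b' (mem_range.1 hb') h
  have himg : (range r).image f = range r := by
    apply eq_of_subset_of_card_le
    · intro z hz
      obtain ⟨b, hb, rfl⟩ := mem_image.1 hz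
      exact mem_range.2 (hf b (mem_range.1 hb))
    · rw [card_image_of_injOn hinjOn]
  apply card_bij (fun b _ => f b)
  · intro b hb
    simp only [mem_filter, mem_range] at hb ⊢
    exact ⟨hf b hb.1, hb.2⟩
  · intro b hb b' hb' h
    simp only [mem_filter, mem_range] at hb hb'
    exact hinj b hb.1 b' hb'.1 h
  · intro z hz
    simp only [mem_filter] at hz
    have hzi : z ∈ (range r).image f := by rw [himg]; exact hz.1
    obtain ⟨b, hb, rfl⟩ := mem_image.1 hzi
    exact ⟨b, mem_filter.2 ⟨hb, hz.2⟩, rfl⟩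

private lemma shift_mod_iff {r : ℕ} (z z' : ℕ) (hz : z < r) (hz' : z' < r) (w : ℕ) :
    (z + w) % r = z' ↔ w % r = (z' + (r - z)) % r := by
  have h1 : ((z + w) % r = z') ↔ (z + w ≡ z' [MOD r]) := by
    rw [Nat.ModEq, Nat.mod_eq_of_lt hz']
  have h2 : (w % r = (z' + (r - z)) % r) ↔ (w ≡ z' + (r - z) [MOD r]) := Iff.rfl
  rw [h1, h2]
  constructor
  · intro h
    have h3 : z + w + (r - z) ≡ z' + (r - z) [MOD r] := h.add_right _
    have h4 : z + w + (r - z) = w + r := by omega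
    rw [h4] at h3
    have h5 : w + r ≡ w [MOD r] := (Nat.add_mod_right w r : (w + r) % r = w % r)
    exact h5.symm.trans h3
  · intro h
    have h3 : z + w ≡ z + (z' + (r - z)) [MOD r] := h.add_left z
    have h4 : z + (z' + (r - z)) = z' + r := by omega
    rw [h4] at h3
    have h5 : z' + r ≡ z' [MOD r] := (Nat.add_mod_right z' r : (z' + r) % r = z' % r)
    exact h3.trans h5

private lemma rangeModCount (q w e : ℕ) (hw : 0 < w) (he : e < w) :
    ((range (q * w)).filter (fun a => a % w = e)).card = q := by
  have main : ((range (q * w)).filter (fun a => a % w = e)).card = (range q).card := by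
    apply card_bij' (fun a _ => a / w) (fun t _ => w * t + e)
    · intro a ha
      simp only [mem_filter, mem_range] at ha
      refine mem_range.2 (by rw [Nat.div_lt_iff_lt_mul hw]; omega)
    · intro t ht
      simp only [mem_range] at ht
      simp only [mem_filter, mem_range]
      constructor
      · calc w * t + e < w * t + w := by omega
          _ = w * (t + 1) := by ring
          _ ≤ w * q := Nat.mul_le_mul_left w (by omega)
          _ = q * w := mul_comm _ _
      · rw [Nat.mul_add_mod, Nat.mod_eq_of_lt he]
    · intro a ha
      simp only [mem_filter, mem_range] at ha
      rw [← ha.2]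
      exact Nat.div_add_mod a w
    · intro t ht
      rw [Nat.mul_add_div hw, Nat.div_eq_of_lt he, add_zero]
  rw [main, card_range]

private lemma icoModCount (L n g v : ℕ) (hg : 0 < g) (hgn : g ∣ n) (hv : v < g) :
    ((Ico L (L + n)).filter (fun z => z % g = v)).card = n / g := by
  have step1 : ((Ico L (L + n)).filter (fun z => z % g = v)).card
      = ((range n).filter (fun j => (L + j) % g = v)).card := by
    apply card_bij' (fun z _ => z - L) (fun t _ => L + t)
    · intro z hz
      simp only [mem_filter, mem_Ico] at hz
      simp only [mem_filter, mem_range]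
      have hLz : L + (z - L) = z := by omega
      rw [hLz]
      exact ⟨by omega, hz.2⟩
    · intro t ht
      simp only [mem_filter, mem_range] at ht
      simp only [mem_filter, mem_Ico]
      exact ⟨⟨by omega, by omega⟩, ht.2⟩
    · intro z hz
      simp only [mem_filter, mem_Ico] at hz
      omega
    · intro t _
      omega
  rw [step1]
  have key : ∀ j ∈ range n, ((L + j) % g = v) ↔ (j % g = (v + (g - L % g)) % g) := by
    intro j _
    rw [show (L + j) % g = (L % g + j) % g from (Nat.mod_add_mod L g j).symm]
    exact shift_mod_iff (L % g) v (Nat.mod_lt L hg) hv j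
  rw [filter_congr key]
  obtain ⟨q, rfl⟩ := hgn
  rw [Nat.mul_div_cancel_left q hg, mul_comm g q]
  exact rangeModCount q g _ hg (Nat.mod_lt _ hg)

private lemma bucketSet (u m y : ℕ) (hu : 0 < u) (hy : y < m) :
    (range (u * m)).filter (fun z => z / u = y) = Ico (u * y) (u * y + u) := by
  ext z
  simp only [mem_filter, mem_range, mem_Ico]
  constructor
  · rintro ⟨hz, h⟩
    have h1 := Nat.div_add_mod z u
    have h2 := Nat.mod_lt z hu
    rw [h] at h1
    omega
  · rintro ⟨h1, h2⟩
    have hdiv : z / u = y := by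
      apply Nat.div_eq_of_lt_le
      · rw [mul_comm]; exact h1
      · rw [Nat.succ_mul, mul_comm]; exact h2
    refine ⟨?_, hdiv⟩
    have : u * (y + 1) ≤ u * m := Nat.mul_le_mul_left u (by omega)
    have : u * y + u ≤ u * m := by rw [Nat.mul_add, mul_one] at this; omega
    omega

private lemma bucketCount (u m y : ℕ) (hu : 0 < u) (hy : y < m) :
    ((range (u * m)).filter (fun z => z / u = y)).card = u := by
  rw [bucketSet u m y hu hy, Nat.card_Ico]
  omega

/-- First moment: for any `x`, the number of pairs hashing `x` into bucket `y`. -/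
private lemma firstMoment (u m y : ℕ) (hu : 0 < u) (hy : y < m) (x : ℕ) :
    (((range (u * m)) ×ˢ (range (u * m))).filter
      (fun p : ℕ × ℕ => ((p.1 * x + p.2) % (u * m)) / u = y)).card = u ^ 2 * m := by
  have hr0 : 0 < u * m := Nat.mul_pos hu (by omega)
  rw [card_filter, Finset.sum_product]
  have inner : ∀ a ∈ range (u * m),
      (∑ b ∈ range (u * m), if ((a * x + b) % (u * m)) / u = y then 1 else 0) = u := by
    intro a _
    rw [← card_filter]
    have := bijCount (u * m) (fun b => (a * x + b) % (u * m))
      (fun b _ => Nat.mod_lt _ hr0)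
      (fun b hb b' hb' h => by
        have : b ≡ b' [MOD u * m] := Nat.ModEq.add_left_cancel' (a * x) h
        rwa [Nat.ModEq, Nat.mod_eq_of_lt hb, Nat.mod_eq_of_lt hb'] at this)
      (fun z => z / u = y)
    rw [this]
    exact bucketCount u m y hu hy
  rw [Finset.sum_congr rfl inner, Finset.sum_const, card_range, smul_eq_mul]
  ring

/-- Count of solutions `a < 2^K` to `(a * 2^s) % 2^K = d`. -/
private lemma subK (K s d : ℕ) (hs : s ≤ K) (hd : d < 2 ^ K) :
    ((range (2 ^ K)).filter (fun a => (a * 2 ^ s) % 2 ^ K = d)).card =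
      if 2 ^ s ∣ d then 2 ^ s else 0 := by
  have hsplit : (2 : ℕ) ^ K = 2 ^ (K - s) * 2 ^ s := by
    rw [← pow_add]; congr 1; omega
  have hmod : ∀ a : ℕ, (a * 2 ^ s) % 2 ^ K = (a % 2 ^ (K - s)) * 2 ^ s := by
    intro a
    rw [hsplit, Nat.mul_mod_mul_right]
  by_cases hdvd : 2 ^ s ∣ d
  · rw [if_pos hdvd]
    have he : d / 2 ^ s < 2 ^ (K - s) := by
      apply Nat.div_lt_iff_lt_mul (Nat.two_pow_pos s) |>.2
      rw [← hsplit]; exact hd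
    have hcond : ∀ a : ℕ, ((a * 2 ^ s) % 2 ^ K = d) ↔ (a % 2 ^ (K - s) = d / 2 ^ s) := by
      intro a
      rw [hmod]
      constructor
      · intro h; rw [← h, Nat.mul_div_cancel _ (Nat.two_pow_pos s)]
      · intro h; rw [h, Nat.div_mul_cancel hdvd]
    rw [filter_congr (fun a _ => by rw [hcond a])]
    have h2 : (2 : ℕ) ^ K = 2 ^ s * 2 ^ (K - s) := by rw [← pow_add]; congr 1; omega
    rw [h2]
    exact rangeModCount (2 ^ s) (2 ^ (K - s)) _ (Nat.two_pow_pos _) he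
  · rw [if_neg hdvd]
    rw [filter_false_of_mem, card_empty]
    intro a _
    rw [hmod]
    intro h
    exact hdvd ⟨a % 2 ^ (K - s), by rw [← h]; ring⟩

private lemma secondMoment (i j y : ℕ) (hy : y < 2 ^ j) (x x' : ℕ)
    (hx : x < 2 ^ i) (hx' : x' < 2 ^ i) (hlt : x < x') :
    (((range (2 ^ i * 2 ^ j)) ×ˢ (range (2 ^ i * 2 ^ j))).filter
      (fun p : ℕ × ℕ => ((p.1 * x + p.2) % (2 ^ i * 2 ^ j)) / 2 ^ i = y ∧
        ((p.1 * x' + p.2) % (2 ^ i * 2 ^ j)) / 2 ^ i = y)).card = (2 ^ i) ^ 2 := by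
  obtain ⟨c, hxx', hc0, hcu⟩ : ∃ c, x' = x + c ∧ c ≠ 0 ∧ c < 2 ^ i :=
    ⟨x' - x, by omega, by omega, by omega⟩
  subst hxx'
  set u : ℕ := 2 ^ i with hudef
  set m : ℕ := 2 ^ j with hmdef
  set r : ℕ := u * m with hrdef
  have hu0 : 0 < u := Nat.two_pow_pos _
  have hm0 : 0 < m := Nat.two_pow_pos _
  have hr0 : 0 < r := Nat.mul_pos hu0 hm0
  have hrpow : r = 2 ^ (i + j) := by rw [hrdef, hudef, hmdef, pow_add]
  obtain ⟨s, t, ht, hct⟩ := Nat.exists_eq_pow_mul_and_not_dvd hc0 2 (by norm_num)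
  have ht0 : 0 < t := Nat.pos_of_ne_zero (fun h => ht (h ▸ dvd_zero 2))
  have hsc : 2 ^ s ≤ c := by
    calc 2 ^ s = 2 ^ s * 1 := (mul_one _).symm
      _ ≤ 2 ^ s * t := Nat.mul_le_mul_left _ ht0
      _ = c := hct.symm
  have hsi : s < i := by
    by_contra h
    have : (2:ℕ) ^ i ≤ 2 ^ s := Nat.pow_le_pow_right (by norm_num) (by omega)
    omega
  set g : ℕ := 2 ^ s with hgdef
  have hg0 : 0 < g := Nat.two_pow_pos _
  have hgu : g ∣ u := pow_dvd_pow 2 hsi.le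
  have hgr : g ∣ r := Dvd.dvd.mul_right hgu m
  have htcop : Nat.Coprime r t := by
    rw [hrpow]
    exact Nat.Coprime.pow_left _ ((Nat.Prime.coprime_iff_not_dvd Nat.prime_two).2 ht)
  -- step B : turn the card into a double sum
  rw [card_filter, Finset.sum_product]
  have hrw : ∀ a b : ℕ, a * (x + c) + b = a * x + b + a * c := fun a b => by ring
  simp only [hrw]
  -- step C : inner sum over b equals sum over hash values z
  have innerEq : ∀ a ∈ range r,
      (∑ b ∈ range r, if ((a * x + b) % r) / u = y ∧ ((a * x + b + a * c) % r) / u = y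
          then (1:ℕ) else 0)
      = ∑ z ∈ range r, if z / u = y ∧ ((z + a * c) % r) / u = y then (1:ℕ) else 0 := by
    intro a _
    rw [← card_filter, ← card_filter]
    have hcongr : ∀ b ∈ range r,
        ((((a * x + b) % r) / u = y ∧ ((a * x + b + a * c) % r) / u = y)) ↔
          ((fun z => z / u = y ∧ ((z + a * c) % r) / u = y) ((a * x + b) % r)) := by
      intro b _
      have hmm : (a * x + b + a * c) % r = ((a * x + b) % r + a * c) % r :=
        (Nat.mod_add_mod (a * x + b) r (a * c)).symm
      rw [hmm]
    rw [filter_congr hcongr]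
    exact bijCount r (fun b => (a * x + b) % r) (fun b _ => Nat.mod_lt _ hr0)
      (fun b hb b' hb' h => by
        have h2 : b ≡ b' [MOD r] := Nat.ModEq.add_left_cancel' (a * x) h
        rwa [Nat.ModEq, Nat.mod_eq_of_lt hb, Nat.mod_eq_of_lt hb'] at h2)
      (fun z => z / u = y ∧ ((z + a * c) % r) / u = y)
  rw [Finset.sum_congr rfl innerEq]
  -- step D : expand to triple sum
  have expand : ∀ a : ℕ, ∀ z ∈ range r,
      (if z / u = y ∧ ((z + a * c) % r) / u = y then (1:ℕ) else 0)
      = ∑ z' ∈ range r, if z / u = y ∧ z' / u = y ∧ (z + a * c) % r = z'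
          then (1:ℕ) else 0 := by
    intro a z _
    have hw : (z + a * c) % r ∈ range r := mem_range.2 (Nat.mod_lt _ hr0)
    have hterm : ∀ z' : ℕ,
        (if z / u = y ∧ z' / u = y ∧ (z + a * c) % r = z' then (1:ℕ) else 0)
        = (if z' = (z + a * c) % r then
            (if z / u = y ∧ ((z + a * c) % r) / u = y then (1:ℕ) else 0) else 0) := by
      intro z'
      by_cases h : z' = (z + a * c) % r
      · subst h
        rw [if_pos rfl]
        by_cases h1 : z / u = y ∧ ((z + a * c) % r) / u = y
        · rw [if_pos ⟨h1.1, h1.2, rfl⟩, if_pos h1]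
        · rw [if_neg (fun hh => h1 ⟨hh.1, hh.2.1⟩), if_neg h1]
      · rw [if_neg h, if_neg (fun hh => h hh.2.2.symm)]
    calc (if z / u = y ∧ ((z + a * c) % r) / u = y then (1:ℕ) else 0)
        = if (z + a * c) % r ∈ range r then
            (if z / u = y ∧ ((z + a * c) % r) / u = y then (1:ℕ) else 0) else 0 := by
          rw [if_pos hw]
      _ = ∑ z' ∈ range r, if z' = (z + a * c) % r then
            (if z / u = y ∧ ((z + a * c) % r) / u = y then (1:ℕ) else 0) else 0 :=
          (Finset.sum_ite_eq' (range r) ((z + a * c) % r)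
            (fun _ => if z / u = y ∧ ((z + a * c) % r) / u = y then (1:ℕ) else 0)).symm
      _ = ∑ z' ∈ range r, if z / u = y ∧ z' / u = y ∧ (z + a * c) % r = z'
            then (1:ℕ) else 0 := Finset.sum_congr rfl (fun z' _ => (hterm z').symm)
  rw [Finset.sum_congr rfl (fun a _ => Finset.sum_congr rfl (expand a))]
  -- swap the sums so that `a` is innermost
  rw [Finset.sum_comm]
  rw [Finset.sum_congr rfl (fun z _ => Finset.sum_comm)]
  -- step E : count solutions in `a` for fixed z, z'
  have kcount : ∀ z ∈ range r, ∀ z' ∈ range r,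
      (∑ a ∈ range r, if z / u = y ∧ z' / u = y ∧ (z + a * c) % r = z'
          then (1:ℕ) else 0)
      = if z / u = y ∧ z' / u = y ∧ z % g = z' % g then g else 0 := by
    intro z hzm z' hzm'
    rw [mem_range] at hzm hzm'
    by_cases hP : z / u = y ∧ z' / u = y
    · set d : ℕ := (z' + (r - z)) % r with hddef
      have hd : d < 2 ^ (i + j) := by rw [← hrpow]; exact Nat.mod_lt _ hr0
      have hstep1 : ∀ a ∈ range r,
          ((z / u = y ∧ z' / u = y ∧ (z + a * c) % r = z') ↔ ((a * c) % r = d)) := by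
        intro a _
        constructor
        · rintro ⟨-, -, h⟩; exact (shift_mod_iff z z' hzm hzm' (a * c)).1 h
        · intro h; exact ⟨hP.1, hP.2, (shift_mod_iff z z' hzm hzm' (a * c)).2 h⟩
      calc (∑ a ∈ range r, if z / u = y ∧ z' / u = y ∧ (z + a * c) % r = z'
              then (1:ℕ) else 0)
          = ((range r).filter (fun a => (a * c) % r = d)).card := by
            rw [← card_filter, filter_congr hstep1]
        _ = ((range r).filter (fun a' => (a' * 2 ^ s) % r = d)).card := by
            have heq : ∀ a ∈ range r,
                (((a * c) % r = d) ↔ ((fun a' => (a' * 2 ^ s) % r = d) ((a * t) % r))) := by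
              intro a _
              have h1 : ((a * t) % r * 2 ^ s) % r = (a * t * 2 ^ s) % r := Nat.mod_mul_mod _ _ _
              have h2 : a * t * 2 ^ s = a * c := by rw [hct]; ring
              show ((a * c) % r = d) ↔ (((a * t) % r * 2 ^ s) % r = d)
              rw [h1, h2]
            rw [filter_congr heq]
            exact bijCount r (fun a => (a * t) % r) (fun a _ => Nat.mod_lt _ hr0)
              (fun a ha a' ha' h => by
                have h2 : a ≡ a' [MOD r] := Nat.ModEq.cancel_right_of_coprime htcop h
                rwa [Nat.ModEq, Nat.mod_eq_of_lt ha, Nat.mod_eq_of_lt ha'] at h2)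
              (fun a' => (a' * 2 ^ s) % r = d)
        _ = (if 2 ^ s ∣ d then 2 ^ s else 0) := by
            rw [hrpow]; exact subK (i + j) s d (by omega) hd
        _ = (if z % g = z' % g then g else 0) := by
            have hdm : d % g = (z' + (r - z)) % g := Nat.mod_mod_of_dvd _ hgr
            have hiff : (g ∣ d) ↔ (z % g = z' % g) := by
              rw [Nat.dvd_iff_mod_eq_zero, hdm, ← Nat.dvd_iff_mod_eq_zero]
              rw [show z' + (r - z) = z' + r - z by omega]
              rw [← Nat.modEq_iff_dvd' (by omega : z ≤ z' + r)]
              have h4 : (z' + r) % g = z' % g := by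
                obtain ⟨q, hq⟩ := hgr
                rw [hq, Nat.add_mul_mod_self_left]
              constructor
              · intro h; exact h.trans h4
              · intro h; exact h.trans h4.symm
            exact if_congr hiff rfl rfl
        _ = (if z / u = y ∧ z' / u = y ∧ z % g = z' % g then g else 0) := by
            by_cases hzz : z % g = z' % g
            · rw [if_pos hzz, if_pos ⟨hP.1, hP.2, hzz⟩]
            · rw [if_neg hzz, if_neg (fun hh => hzz hh.2.2)]
    · rw [if_neg (fun hh => hP ⟨hh.1, hh.2.1⟩)]
      exact Finset.sum_eq_zero (fun a _ => if_neg (fun hh => hP ⟨hh.1, hh.2.1⟩))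
  rw [Finset.sum_congr rfl (fun z hz => Finset.sum_congr rfl (fun z' hz' => kcount z hz z' hz'))]
  -- step F : final counting
  have inner2 : ∀ z ∈ range r,
      (∑ z' ∈ range r, if z / u = y ∧ z' / u = y ∧ z % g = z' % g then g else 0)
      = if z / u = y then u else 0 := by
    intro z _
    by_cases hzy : z / u = y
    · rw [if_pos hzy]
      have hterm2 : ∀ z' ∈ range r,
          ((if z / u = y ∧ z' / u = y ∧ z % g = z' % g then g else 0)
          = (if z' / u = y ∧ z' % g = z % g then g else 0)) := by
        intro z' _
        refine if_congr ?_ rfl rfl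
        constructor
        · rintro ⟨_, h2, h3⟩; exact ⟨h2, h3.symm⟩
        · rintro ⟨h2, h3⟩; exact ⟨hzy, h2, h3.symm⟩
      rw [Finset.sum_congr rfl hterm2, Finset.sum_ite, Finset.sum_const,
        Finset.sum_const_zero, add_zero, smul_eq_mul]
      have hff : (range r).filter (fun z' => z' / u = y ∧ z' % g = z % g)
          = ((range r).filter (fun z' => z' / u = y)).filter (fun z' => z' % g = z % g) := by
        rw [filter_filter]
      rw [hff, hrdef, bucketSet u m y hu0 hy,
        icoModCount (u * y) u g (z % g) hg0 hgu (Nat.mod_lt z hg0)]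
      exact Nat.div_mul_cancel hgu
    · rw [if_neg hzy]
      exact Finset.sum_eq_zero (fun z' _ => if_neg (fun hh => hzy hh.1))
  rw [Finset.sum_congr rfl inner2, Finset.sum_ite, Finset.sum_const,
    Finset.sum_const_zero, add_zero, smul_eq_mul, hrdef, bucketCount u m y hu0 hy]
  exact (sq u).symm ▸ (by ring)

/-- Chebyshev load bound for the Dietzfelbinger family: for `δ > 0`, a nonempty
`S ⊆ {0,…,u−1}` and a bucket `y < m`, the fraction of pairs `(a,b)` for which
bucket `y` receives at least `(1+δ)·|S|/m` elements of `S` is at most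
`m/(δ²·|S|)`. -/
theorem stmt_4 (u m : ℕ) (hu : ∃ i, u = 2 ^ i) (hm : ∃ j, m = 2 ^ j) (hmu : m < u)
    (δ : ℝ) (hδ : 0 < δ) (S : Finset ℕ) (hSu : ∀ x ∈ S, x < u) (hS : S.Nonempty)
    (y : ℕ) (hy : y < m) :
    ((((Finset.range (u * m)) ×ˢ (Finset.range (u * m))).filter
      (fun p => (1 + δ) * S.card / m ≤
        ((S.filter (fun x => ((p.1 * x + p.2) % (u * m)) / u = y)).card : ℝ))).card : ℝ)
      ≤ ((u * m) ^ 2 : ℕ) * m / (δ ^ 2 * S.card) := by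
  obtain ⟨i, rfl⟩ := hu
  obtain ⟨j, rfl⟩ := hm
  have hu0 : 0 < 2 ^ i := Nat.two_pow_pos _
  have hm0 : 0 < 2 ^ j := Nat.two_pow_pos _
  set A : Finset (ℕ × ℕ) := (range (2 ^ i * 2 ^ j)) ×ˢ (range (2 ^ i * 2 ^ j)) with hA
  set F : ℕ × ℕ → ℕ :=
    fun p => (S.filter (fun x => ((p.1 * x + p.2) % (2 ^ i * 2 ^ j)) / 2 ^ i = y)).card
    with hF
  set n : ℕ := S.card with hn
  have hn0 : 0 < n := card_pos.2 hS
  -- first moment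
  have fact1 : (∑ p ∈ A, F p) = n * ((2 ^ i) ^ 2 * 2 ^ j) := by
    have h1 : ∀ p ∈ A, F p = ∑ x ∈ S,
        if ((p.1 * x + p.2) % (2 ^ i * 2 ^ j)) / 2 ^ i = y then 1 else 0 :=
      fun p _ => card_filter _ _
    rw [Finset.sum_congr rfl h1, Finset.sum_comm]
    have h2 : ∀ x ∈ S, (∑ p ∈ A,
        if ((p.1 * x + p.2) % (2 ^ i * 2 ^ j)) / 2 ^ i = y then 1 else 0)
        = (2 ^ i) ^ 2 * 2 ^ j := by
      intro x _
      rw [← card_filter]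
      exact firstMoment (2 ^ i) (2 ^ j) y hu0 hy x
    rw [Finset.sum_congr rfl h2, Finset.sum_const, smul_eq_mul]
  -- second moment
  have fact2 : (∑ p ∈ A, (F p) ^ 2) ≤ n * ((2 ^ i) ^ 2 * 2 ^ j) + n ^ 2 * (2 ^ i) ^ 2 := by
    have h1 : ∀ p ∈ A, (F p) ^ 2 = ∑ x ∈ S, ∑ x' ∈ S,
        if (((p.1 * x + p.2) % (2 ^ i * 2 ^ j)) / 2 ^ i = y ∧
            ((p.1 * x' + p.2) % (2 ^ i * 2 ^ j)) / 2 ^ i = y) then 1 else 0 := by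
      intro p _
      simp only [hF]
      rw [card_filter, pow_two, Finset.sum_mul_sum]
      refine Finset.sum_congr rfl (fun x _ => Finset.sum_congr rfl (fun x' _ => ?_))
      by_cases h1 : ((p.1 * x + p.2) % (2 ^ i * 2 ^ j)) / 2 ^ i = y <;>
        by_cases h2 : ((p.1 * x' + p.2) % (2 ^ i * 2 ^ j)) / 2 ^ i = y <;>
        simp [h1, h2]
    rw [Finset.sum_congr rfl h1, Finset.sum_comm]
    have h2 : ∀ x ∈ S, (∑ p ∈ A, ∑ x' ∈ S,
        if (((p.1 * x + p.2) % (2 ^ i * 2 ^ j)) / 2 ^ i = y ∧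
            ((p.1 * x' + p.2) % (2 ^ i * 2 ^ j)) / 2 ^ i = y) then 1 else 0)
        = ∑ x' ∈ S, (A.filter (fun p =>
            ((p.1 * x + p.2) % (2 ^ i * 2 ^ j)) / 2 ^ i = y ∧
            ((p.1 * x' + p.2) % (2 ^ i * 2 ^ j)) / 2 ^ i = y)).card := by
      intro x _
      rw [Finset.sum_comm]
      exact Finset.sum_congr rfl (fun x' _ => (card_filter _ _).symm)
    rw [Finset.sum_congr rfl h2]
    -- diagonal and off-diagonal
    have hdiag : ∀ x ∈ S, (A.filter (fun p =>
        ((p.1 * x + p.2) % (2 ^ i * 2 ^ j)) / 2 ^ i = y ∧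
        ((p.1 * x + p.2) % (2 ^ i * 2 ^ j)) / 2 ^ i = y)).card = (2 ^ i) ^ 2 * 2 ^ j := by
      intro x _
      rw [filter_congr (fun p _ => and_self_iff)]
      exact firstMoment (2 ^ i) (2 ^ j) y hu0 hy x
    have hoff : ∀ x ∈ S, ∀ x' ∈ S, x ≠ x' → (A.filter (fun p =>
        ((p.1 * x + p.2) % (2 ^ i * 2 ^ j)) / 2 ^ i = y ∧
        ((p.1 * x' + p.2) % (2 ^ i * 2 ^ j)) / 2 ^ i = y)).card = (2 ^ i) ^ 2 := by
      intro x hx x' hx' hne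
      rcases lt_or_gt_of_ne hne with h | h
      · exact secondMoment i j y hy x x' (hSu x hx) (hSu x' hx') h
      · rw [filter_congr (fun p _ => and_comm)]
        exact secondMoment i j y hy x' x (hSu x' hx') (hSu x hx) h
    calc (∑ x ∈ S, ∑ x' ∈ S, (A.filter (fun p =>
            ((p.1 * x + p.2) % (2 ^ i * 2 ^ j)) / 2 ^ i = y ∧
            ((p.1 * x' + p.2) % (2 ^ i * 2 ^ j)) / 2 ^ i = y)).card)
        ≤ ∑ x ∈ S, ((2 ^ i) ^ 2 * 2 ^ j + (n - 1) * (2 ^ i) ^ 2) := by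
          apply Finset.sum_le_sum
          intro x hx
          rw [← Finset.add_sum_erase S _ hx, hdiag x hx]
          have herase : (∑ x' ∈ S.erase x, (A.filter (fun p =>
              ((p.1 * x + p.2) % (2 ^ i * 2 ^ j)) / 2 ^ i = y ∧
              ((p.1 * x' + p.2) % (2 ^ i * 2 ^ j)) / 2 ^ i = y)).card)
              = (n - 1) * (2 ^ i) ^ 2 := by
            rw [Finset.sum_congr rfl (fun x' hx' => hoff x hx x' (mem_of_mem_erase hx')
              (fun hh => (ne_of_mem_erase hx') hh.symm)), Finset.sum_const,
              card_erase_of_mem hx, smul_eq_mul, hn]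
          rw [herase]
      _ ≤ n * ((2 ^ i) ^ 2 * 2 ^ j) + n ^ 2 * (2 ^ i) ^ 2 := by
          rw [Finset.sum_const, smul_eq_mul, ← hn, Nat.mul_add]
          have h6 : n * ((n - 1) * (2 ^ i) ^ 2) ≤ n ^ 2 * (2 ^ i) ^ 2 := by
            calc n * ((n - 1) * (2 ^ i) ^ 2) = (n * (n - 1)) * (2 ^ i) ^ 2 :=
                  (Nat.mul_assoc _ _ _).symm
              _ ≤ (n * n) * (2 ^ i) ^ 2 :=
                  Nat.mul_le_mul_right _ (Nat.mul_le_mul_left n (by omega))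
              _ = n ^ 2 * (2 ^ i) ^ 2 := by rw [← pow_two]
          omega
  -- pass to the reals
  set U : ℝ := (2 : ℝ) ^ i with hU
  set M : ℝ := (2 : ℝ) ^ j with hM
  set N : ℝ := (n : ℝ) with hN
  have hUpos : 0 < U := by rw [hU]; positivity
  have hMpos : 0 < M := by rw [hM]; positivity
  have hNpos : 0 < N := by rw [hN]; exact_mod_cast hn0
  have hF1 : (∑ p ∈ A, (F p : ℝ)) = N * (U ^ 2 * M) := by
    have := congrArg (fun k : ℕ => (k : ℝ)) fact1
    push_cast at this
    rw [← hU, ← hM, ← hN] at this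
    exact this
  have hF2 : (∑ p ∈ A, (F p : ℝ) ^ 2) ≤ N * (U ^ 2 * M) + N ^ 2 * U ^ 2 := by
    have := (Nat.cast_le (α := ℝ)).2 fact2
    push_cast at this
    rw [← hU, ← hM, ← hN] at this
    exact this
  have hAcard : ((A.card : ℝ)) = U ^ 2 * M ^ 2 := by
    rw [hA, card_product, card_range]
    push_cast
    rw [← hU, ← hM]
    ring
  set μ : ℝ := N / M with hμ
  have hμpos : 0 < μ := div_pos hNpos hMpos
  -- variance bound
  have hvar : (∑ p ∈ A, ((F p : ℝ) - μ) ^ 2) ≤ N * (U ^ 2 * M) := by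
    have hexp : (∑ p ∈ A, ((F p : ℝ) - μ) ^ 2)
        = (∑ p ∈ A, (F p : ℝ) ^ 2) - 2 * μ * (∑ p ∈ A, (F p : ℝ))
          + (A.card : ℝ) * μ ^ 2 := by
      rw [Finset.sum_congr rfl
        (fun p _ => show ((F p : ℝ) - μ) ^ 2 = (F p : ℝ) ^ 2 - 2 * μ * (F p : ℝ) + μ ^ 2
          from by ring)]
      rw [Finset.sum_add_distrib, Finset.sum_sub_distrib, ← Finset.mul_sum,
        Finset.sum_const, nsmul_eq_mul]
    rw [hexp, hF1, hAcard]
    have hcancel : 2 * μ * (N * (U ^ 2 * M)) = 2 * (N ^ 2 * U ^ 2) := by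
      rw [hμ]; field_simp
    have hcancel2 : U ^ 2 * M ^ 2 * μ ^ 2 = N ^ 2 * U ^ 2 := by
      rw [hμ]; field_simp
    rw [hcancel, hcancel2]
    linarith [hF2]
  -- Chebyshev
  set T := A.filter (fun p => (1 + δ) * N / ((2 ^ j : ℕ) : ℝ) ≤
      ((S.filter (fun x => ((p.1 * x + p.2) % (2 ^ i * 2 ^ j)) / 2 ^ i = y)).card : ℝ))
    with hT
  have hTsub : T ⊆ A := filter_subset _ _
  have hTbound : (T.card : ℝ) * (δ * μ) ^ 2 ≤ N * (U ^ 2 * M) := by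
    have hterm : ∀ p ∈ T, (δ * μ) ^ 2 ≤ ((F p : ℝ) - μ) ^ 2 := by
      intro p hp
      rw [hT, mem_filter] at hp
      have h1 : (1 + δ) * N / ((2 ^ j : ℕ) : ℝ) = μ + δ * μ := by
        rw [hμ, show ((2 ^ j : ℕ) : ℝ) = M by push_cast; rw [hM]]
        ring
      have h2 : δ * μ ≤ (F p : ℝ) - μ := by
        have h2' := hp.2
        rw [h1] at h2'
        simp only [hF]
        linarith
      have h3 : 0 ≤ δ * μ := le_of_lt (mul_pos hδ hμpos)
      exact pow_le_pow_left₀ h3 h2 2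
    calc (T.card : ℝ) * (δ * μ) ^ 2 = ∑ _p ∈ T, (δ * μ) ^ 2 := by
          rw [Finset.sum_const, nsmul_eq_mul]
      _ ≤ ∑ p ∈ T, ((F p : ℝ) - μ) ^ 2 := Finset.sum_le_sum hterm
      _ ≤ ∑ p ∈ A, ((F p : ℝ) - μ) ^ 2 := by
          apply Finset.sum_le_sum_of_subset_of_nonneg hTsub
          intro p _ _
          positivity
      _ ≤ N * (U ^ 2 * M) := hvar
  -- conclude
  have hgoalrhs : (((2 ^ i * 2 ^ j) ^ 2 : ℕ) : ℝ) * ((2 ^ j : ℕ) : ℝ) = (U * M) ^ 2 * M := by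
    push_cast
    rw [← hU, ← hM]
  rw [hgoalrhs]
  rw [le_div_iff₀ (by positivity)]
  have h2 : (T.card : ℝ) * (δ ^ 2 * N ^ 2) ≤ N * (U ^ 2 * M) * M ^ 2 := by
    have h3 : (T.card : ℝ) * (δ * μ) ^ 2 * M ^ 2 ≤ N * (U ^ 2 * M) * M ^ 2 :=
      mul_le_mul_of_nonneg_right hTbound (by positivity)
    have h4 : (δ * μ) ^ 2 * M ^ 2 = δ ^ 2 * N ^ 2 := by
      rw [hμ, mul_pow, div_pow, mul_assoc,
        div_mul_cancel₀ _ (by positivity : (M:ℝ) ^ 2 ≠ 0)]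
    calc (T.card : ℝ) * (δ ^ 2 * N ^ 2) = (T.card : ℝ) * (δ * μ) ^ 2 * M ^ 2 := by
          rw [mul_assoc, h4]
      _ ≤ N * (U ^ 2 * M) * M ^ 2 := h3
  have h5 : ((T.card : ℝ) * (δ ^ 2 * N)) * N ≤ ((U * M) ^ 2 * M) * N := by
    nlinarith [h2]
  exact le_of_mul_le_mul_right h5 hNpos
end

section
/- Let u and m be powers of two with m < u, set r = u·m, and let k be a positive integer. Then for every set S ⊆ {0,...,u−1} with k²·|S|² ≤ m, the number of pairs (a,b) ∈ {0,...,r−1}² for which there exists y ∈ {0,...,m−1} such that |S ∩ (⋃_{j=0}^{k−1} h_{a,b}^{-1}((y+j) mod m))| > 1 is at most r²/2. Equivalently, with probability at least 1/2 over a uniformly random (a,b), no two distinct elements of S are mapped by h_{a,b} into a common cyclic window {y, y+1 mod m, ..., y+k−1 mod m} of length k. -/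
open scoped Classical
open Finset


/-- reindex a sum over `range (a*b)` as a double sum -/
lemma sum_range_mul {M : Type*} [AddCommMonoid M] (a b : ℕ) (f : ℕ → M) :
    ∑ x ∈ range (a * b), f x = ∑ j ∈ range a, ∑ i ∈ range b, f (i + j * b) := by
  rcases Nat.eq_zero_or_pos b with hb | hb
  · subst hb; simp
  rw [← Finset.sum_product']
  refine Finset.sum_nbij' (fun x => (x / b, x % b)) (fun p => p.2 + p.1 * b) ?_ ?_ ?_ ?_ ?_
  · intro x hx
    simp only [mem_range, mem_product] at *
    exact ⟨Nat.div_lt_of_lt_mul (by rwa [Nat.mul_comm] at hx), Nat.mod_lt _ hb⟩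
  · intro p hp
    simp only [mem_range, mem_product] at *
    calc p.2 + p.1 * b < b + p.1 * b := by omega
      _ = (p.1 + 1) * b := by ring
      _ ≤ a * b := Nat.mul_le_mul_right _ (by omega)
  · intro x hx
    simp [Nat.mod_add_div']
  · intro p hp
    simp only [mem_range, mem_product] at hp
    have h1 : (p.2 + p.1 * b) / b = p.1 := by
      rw [Nat.add_mul_div_right _ _ hb, Nat.div_eq_of_lt hp.2]; omega
    have h2 : (p.2 + p.1 * b) % b = p.2 := by
      rw [Nat.add_mul_mod_self_right, Nat.mod_eq_of_lt hp.2]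
    simp [h1, h2]
  · intro x hx
    show f x = f (x % b + x / b * b)
    rw [Nat.mod_add_div']

/-- shifting by a constant mod r permutes range r -/
lemma sum_mod_shift {M : Type*} [AddCommMonoid M] (r t : ℕ) (f : ℕ → M) :
    ∑ b ∈ range r, f ((t + b) % r) = ∑ A ∈ range r, f A := by
  rcases Nat.eq_zero_or_pos r with hr | hr
  · subst hr; simp
  refine Finset.sum_nbij' (fun b => (t + b) % r) (fun A => (A + (r - t % r)) % r)
    ?_ ?_ ?_ ?_ ?_
  · intro b hb; simp only [mem_range] at *; exact Nat.mod_lt _ hr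
  · intro A hA; simp only [mem_range] at *; exact Nat.mod_lt _ hr
  · intro b hb
    simp only [mem_range] at hb
    set e := t % r with he
    have her : e < r := Nat.mod_lt _ hr
    obtain ⟨d, hd⟩ : ∃ d, t = r * d + e := ⟨t / r, (Nat.div_add_mod t r).symm⟩
    show ((t + b) % r + (r - e)) % r = b
    rw [Nat.mod_add_mod]
    have key : t + b + (r - e) = b + r * (d + 1) := by
      have hd' : (t : ℤ) = (r : ℤ) * (d : ℤ) + (e : ℤ) := by exact_mod_cast hd
      zify [show e ≤ r from le_of_lt her]
      linear_combination hd'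
    rw [key, Nat.add_mul_mod_self_left, Nat.mod_eq_of_lt hb]
  · intro A hA
    simp only [mem_range] at hA
    set e := t % r with he
    have her : e < r := Nat.mod_lt _ hr
    obtain ⟨d, hd⟩ : ∃ d, t = r * d + e := ⟨t / r, (Nat.div_add_mod t r).symm⟩
    show (t + (A + (r - e)) % r) % r = A
    rw [Nat.add_mod_mod]
    have key : t + (A + (r - e)) = A + r * (d + 1) := by
      have hd' : (t : ℤ) = (r : ℤ) * (d : ℤ) + (e : ℤ) := by exact_mod_cast hd
      zify [show e ≤ r from le_of_lt her]
      linear_combination hd'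
    rw [key, Nat.add_mul_mod_self_left, Nat.mod_eq_of_lt hA]
  · intro b hb; rfl

lemma card_mod_shift (r t : ℕ) (p : ℕ → Prop) [DecidablePred p] :
    ((range r).filter (fun b => p ((t + b) % r))).card = ((range r).filter p).card := by
  rw [Finset.card_filter, Finset.card_filter]
  exact sum_mod_shift r t (fun A => if p A then 1 else 0)


/-- the cyclic-distance condition -/
def dc (m k h1 h2 : ℕ) : Prop := (h1 + m - h2) % m < k ∨ (h2 + m - h1) % m < k

instance (m k h1 h2 : ℕ) : Decidable (dc m k h1 h2) := by unfold dc; infer_instance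

lemma key_div (u m B w : ℕ) (hu : 0 < u) (hm : 0 < m) (hw : w < u) :
    ((w + B * u) % (u * m)) / u = B % m := by
  set E := B % m with hE
  obtain ⟨D, hD⟩ : ∃ D, B = m * D + E := ⟨B / m, (Nat.div_add_mod B m).symm⟩
  have hEm : E < m := Nat.mod_lt _ hm
  have h0 : w + B * u = (w + E * u) + (u * m) * D := by
    have hd : (B : ℤ) = (m : ℤ) * (D : ℤ) + (E : ℤ) := by exact_mod_cast hD
    zify
    linear_combination (u : ℤ) * hd
  have h1 : (w + B * u) % (u * m) = w + E * u := by
    rw [h0, Nat.add_mul_mod_self_left]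
    apply Nat.mod_eq_of_lt
    calc w + E * u < u + E * u := by omega
      _ = (E + 1) * u := by ring
      _ ≤ m * u := Nat.mul_le_mul_right _ (by omega)
      _ = u * m := by ring
  rw [h1, Nat.add_mul_div_right _ _ hu, Nat.div_eq_of_lt hw, Nat.zero_add]

lemma dc_eval (m k h1 q : ℕ) (hm : 0 < m) (h1m : h1 < m) (hq : q < m) :
    dc m k h1 ((h1 + (m - q)) % m) ↔ (q < k ∨ (m - q) % m < k) := by
  unfold dc
  rcases le_or_gt q h1 with h | h
  · have e1 : (h1 + (m - q)) % m = h1 - q := by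
      rw [show h1 + (m - q) = (h1 - q) + m by omega, Nat.add_mod_right,
        Nat.mod_eq_of_lt (by omega)]
    rw [e1, show h1 + m - (h1 - q) = q + m by omega,
      show (h1 - q) + m - h1 = m - q by omega,
      show (q + m) % m = q from by rw [Nat.add_mod_right]; exact Nat.mod_eq_of_lt hq]
  · have e1 : (h1 + (m - q)) % m = h1 + (m - q) := Nat.mod_eq_of_lt (by omega)
    rw [e1, show h1 + m - (h1 + (m - q)) = q by omega,
      show h1 + (m - q) + m - h1 = (m - q) + m by omega,
      Nat.add_mod_right, Nat.mod_eq_of_lt hq]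

lemma dc_eval' (m k h1 q : ℕ) (hm : 0 < m) (h1m : h1 < m) (hq : q < m) :
    dc m k h1 ((h1 + (m - q) - 1) % m) ↔
      ((q + 1) % m < k ∨ (m - (q + 1) % m) % m < k) := by
  rcases eq_or_lt_of_le (Nat.succ_le_of_lt hq) with h | h
  · have hq1 : (q + 1) % m = 0 := by rw [show q + 1 = m from h, Nat.mod_self]
    rw [show h1 + (m - q) - 1 = h1 from by omega, Nat.mod_eq_of_lt h1m, hq1]
    unfold dc
    rw [show h1 + m - h1 = m from by omega, Nat.mod_self, Nat.sub_zero, Nat.mod_self]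
  · rw [show h1 + (m - q) - 1 = h1 + (m - (q + 1)) from by omega,
      Nat.mod_eq_of_lt (show q + 1 < m from h)]
    exact dc_eval m k h1 (q + 1) hm h1m h


lemma window_dc_aux (m k y j1 j2 : ℕ) (hm : 0 < m) (hk : k ≤ m) (hj1 : j1 < k)
    (hle : j2 ≤ j1) : ((y + j1) % m + m - (y + j2) % m) % m < k := by
  set Y1 := (y + j1) % m with hY1
  set Y2 := (y + j2) % m with hY2
  have hY1m : Y1 < m := Nat.mod_lt _ hm
  have hY2m : Y2 < m := Nat.mod_lt _ hm
  have step : (Y1 + m - Y2) + (Y2 + j2) ≡ (j1 - j2) + (Y2 + j2) [MOD m] := by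
    have a1 : (Y1 + m - Y2) + (Y2 + j2) = Y1 + j2 + m := by omega
    have a2 : (j1 - j2) + (Y2 + j2) = Y2 + j1 := by omega
    rw [a1, a2]
    calc Y1 + j2 + m ≡ Y1 + j2 [MOD m] := Nat.add_mod_right _ _
      _ ≡ (y + j1) + j2 [MOD m] := (Nat.mod_modEq _ _).add_right _
      _ = (y + j2) + j1 := by omega
      _ ≡ Y2 + j1 [MOD m] := ((Nat.mod_modEq _ _).symm).add_right _
  have h2 : (Y1 + m - Y2) % m = (j1 - j2) % m := Nat.ModEq.add_right_cancel' _ step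
  rw [h2, Nat.mod_eq_of_lt (by omega)]
  omega

lemma window_dc (m k y j1 j2 h1 h2 : ℕ) (hm : 0 < m) (hk : k ≤ m) (hj1 : j1 < k)
    (hj2 : j2 < k) (e1 : h1 = (y + j1) % m) (e2 : h2 = (y + j2) % m) : dc m k h1 h2 := by
  subst e1; subst e2
  rcases le_total j2 j1 with h | h
  · exact Or.inl (window_dc_aux m k y j1 j2 hm hk hj1 h)
  · exact Or.inr (window_dc_aux m k y j2 j1 hm hk hj2 h)

lemma shift_eq (r a x x' b : ℕ) (hr : 0 < r) (hle : x' ≤ x) :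
    (a * x' + b) % r = ((a * x + b) % r + (r - (a * (x - x')) % r)) % r := by
  rw [Nat.mod_add_mod]
  set c := (a * (x - x')) % r with hc
  have hcr : c < r := Nat.mod_lt _ hr
  obtain ⟨d, hd⟩ : ∃ d, a * (x - x') = r * d + c := ⟨_, (Nat.div_add_mod _ _).symm⟩
  have hxz : a * x = a * x' + a * (x - x') := by
    rw [← Nat.mul_add, Nat.add_sub_cancel' hle]
  set Z := a * (x - x') with hZ
  have key : a * x + b + (r - c) = (a * x' + b) + r * (d + 1) := by
    have h1' : (a : ℤ) * (x : ℤ) = (a : ℤ) * (x' : ℤ) + (Z : ℤ) := by exact_mod_cast hxz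
    have h2' : (Z : ℤ) = (r : ℤ) * (d : ℤ) + (c : ℤ) := by exact_mod_cast hd
    zify [hcr.le]
    linear_combination h1' + h2'
  rw [key, Nat.add_mul_mod_self_left]




lemma Nc_eval (u m k q s : ℕ) (hu : 0 < u) (hm : 0 < m) (hq : q < m) (hs : s < u) :
    ((range (u * m)).filter (fun A =>
        dc m k (A / u) (((A + (u * m - (q * u + s))) % (u * m)) / u))).card
      = m * ((u - s) * (if q < k ∨ (m - q) % m < k then 1 else 0)
           + s * (if (q + 1) % m < k ∨ (m - (q + 1) % m) % m < k then 1 else 0)) := by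
  set E1 : ℕ := if q < k ∨ (m - q) % m < k then 1 else 0 with hE1
  set E2 : ℕ := if (q + 1) % m < k ∨ (m - (q + 1) % m) % m < k then 1 else 0 with hE2
  have hc'le : q * u + s ≤ u * m := le_of_lt <| by
    calc q * u + s < q * u + u := by omega
      _ = (q + 1) * u := by ring
      _ ≤ m * u := Nat.mul_le_mul_right _ (by omega)
      _ = u * m := by ring
  have hsr := sum_range_mul m u (fun A =>
      if dc m k (A / u) (((A + (u * m - (q * u + s))) % (u * m)) / u) then 1 else 0)
  rw [mul_comm m u] at hsr
  rw [Finset.card_filter, hsr]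
  have inner : ∀ h1 ∈ range m, (∑ t ∈ range u,
      if dc m k ((t + h1 * u) / u)
        (((t + h1 * u + (u * m - (q * u + s))) % (u * m)) / u) then 1 else 0)
      = (u - s) * E1 + s * E2 := by
    intro h1 hh1
    rw [mem_range] at hh1
    have step : ∀ t ∈ range u, (if dc m k ((t + h1 * u) / u)
        (((t + h1 * u + (u * m - (q * u + s))) % (u * m)) / u) then 1 else 0)
        = if s ≤ t then E1 else E2 := by
      intro t ht
      rw [mem_range] at ht
      have hdiv : (t + h1 * u) / u = h1 := by
        rw [Nat.add_mul_div_right _ _ hu, Nat.div_eq_of_lt ht, Nat.zero_add]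
      by_cases hst : s ≤ t
      · have e : t + h1 * u + (u * m - (q * u + s)) = (t - s) + (h1 + (m - q)) * u := by
          zify [hst, hc'le, hq.le]
          ring
        rw [hdiv, e, key_div u m _ _ hu hm (by omega), if_pos hst]
        simp only [dc_eval m k h1 q hm hh1 hq]
        convert hE1.symm
      · have e : t + h1 * u + (u * m - (q * u + s))
            = (u + t - s) + (h1 + (m - q) - 1) * u := by
          zify [show s ≤ u + t by omega, hc'le, hq.le, show (1:ℕ) ≤ h1 + (m - q) by omega]
          ring
        rw [hdiv, e, key_div u m _ _ hu hm (by omega), if_neg hst]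
        simp only [dc_eval' m k h1 q hm hh1 hq]
        convert hE2.symm
    rw [Finset.sum_congr rfl step, Finset.sum_ite, Finset.sum_const, Finset.sum_const]
    have f1 : (range u).filter (fun t => s ≤ t) = Finset.Ico s u := by
      ext t; simp only [mem_filter, mem_range, Finset.mem_Ico]; omega
    have f2 : (range u).filter (fun t => ¬ s ≤ t) = range s := by
      ext t; simp only [mem_filter, mem_range]; omega
    rw [f1, f2, Nat.card_Ico, Finset.card_range, smul_eq_mul, smul_eq_mul]
  rw [Finset.sum_congr rfl inner, Finset.sum_const, Finset.card_range, smul_eq_mul]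



lemma Ep_card_le (m k : ℕ) (hk : 0 < k) (hkm : k ≤ m) :
    ((range m).filter (fun q => q < k ∨ (m - q) % m < k)).card ≤ 2 * k - 1 := by
  have hsub : (range m).filter (fun q => q < k ∨ (m - q) % m < k)
      ⊆ range k ∪ Finset.Ico (m + 1 - k) m := by
    intro q hq
    simp only [mem_filter, mem_range, mem_union, Finset.mem_Ico] at *
    obtain ⟨hqm, hcase⟩ := hq
    by_cases hqk : q < k
    · exact Or.inl hqk
    · rcases hcase with h | h
      · exact Or.inl h
      · rw [Nat.mod_eq_of_lt (by omega)] at h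
        exact Or.inr (by omega)
  calc ((range m).filter (fun q => q < k ∨ (m - q) % m < k)).card
      ≤ (range k ∪ Finset.Ico (m + 1 - k) m).card := Finset.card_le_card hsub
    _ ≤ (range k).card + (Finset.Ico (m + 1 - k) m).card := Finset.card_union_le _ _
    _ ≤ 2 * k - 1 := by rw [Finset.card_range, Nat.card_Ico]; omega

lemma E1_sum_le (m k : ℕ) (hk : 0 < k) (hkm : k ≤ m) :
    ∑ q ∈ range m, (if q < k ∨ (m - q) % m < k then 1 else 0) ≤ 2 * k - 1 := by
  rw [← Finset.card_filter]
  exact Ep_card_le m k hk hkm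

lemma E2_sum_le (m k : ℕ) (hm : 0 < m) (hk : 0 < k) (hkm : k ≤ m) :
    ∑ q ∈ range m, (if (q + 1) % m < k ∨ (m - (q + 1) % m) % m < k then 1 else 0)
      ≤ 2 * k - 1 := by
  rw [← Finset.card_filter]
  refine le_trans (Finset.card_le_card_of_injOn (fun q => (q + 1) % m) ?_ ?_)
    (Ep_card_le m k hk hkm)
  · intro q hq
    simp only [Finset.coe_filter, Set.mem_setOf_eq, Finset.mem_coe, mem_filter, mem_range] at *
    exact ⟨Nat.mod_lt _ hm, hq.2⟩
  · intro a ha b hb hEq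
    simp only [Finset.coe_filter, Set.mem_setOf_eq, mem_range] at ha hb
    simp only at hEq
    have ham : a < m := ha.1
    have hbm : b < m := hb.1
    by_cases ha1 : a + 1 = m
    · by_cases hb1 : b + 1 = m
      · omega
      · rw [ha1, Nat.mod_self, Nat.mod_eq_of_lt (by omega)] at hEq; omega
    · by_cases hb1 : b + 1 = m
      · rw [hb1, Nat.mod_self, Nat.mod_eq_of_lt (by omega)] at hEq; omega
      · rw [Nat.mod_eq_of_lt (by omega), Nat.mod_eq_of_lt (by omega)] at hEq; omega

lemma pair_count (u m k : ℕ) (i0 j0 : ℕ) (hui : u = 2 ^ i0) (hmj : m = 2 ^ j0)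
    (hm : 0 < m) (hk : 0 < k) (hkm : k ≤ m) (x x' : ℕ) (hx : x < u) (hx' : x' < x) :
    (((range (u * m)) ×ˢ (range (u * m))).filter
      (fun p => dc m k (((p.1 * x + p.2) % (u * m)) / u)
        (((p.1 * x' + p.2) % (u * m)) / u))).card
      ≤ (2 * k - 1) * (u * u * m) := by
  have hu : 0 < u := by rw [hui]; positivity
  have hr0 : 0 < u * m := Nat.mul_pos hu hm
  set z := x - x' with hzdef
  have hz0 : 0 < z := by omega
  have hzu : z < u := by omega
  set g := Nat.gcd z (u * m) with hgdef
  have hgz : g ∣ z := Nat.gcd_dvd_left _ _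
  have hgr : g ∣ u * m := Nat.gcd_dvd_right _ _
  have hg0 : 0 < g := Nat.gcd_pos_of_pos_left _ hz0
  have hgle : g ≤ z := Nat.le_of_dvd hz0 hgz
  have hgu : g ∣ u := by
    have hrpow : u * m = 2 ^ (i0 + j0) := by rw [hui, hmj, pow_add]
    obtain ⟨e, _, hge⟩ := (Nat.dvd_prime_pow Nat.prime_two).mp (hrpow ▸ hgr)
    have hlt : (2 : ℕ) ^ e < 2 ^ i0 := by
      rw [← hge, ← hui]; omega
    have hei : e ≤ i0 := ((Nat.pow_lt_pow_iff_right (by norm_num)).mp hlt).le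
    rw [hui, hge]
    exact pow_dvd_pow 2 hei
  obtain ⟨u₁, hu₁⟩ := hgu
  obtain ⟨z₁, hz₁⟩ := hgz
  have hu₁0 : 0 < u₁ := by
    rcases Nat.eq_zero_or_pos u₁ with h | h
    · rw [h, Nat.mul_zero] at hu₁; omega
    · exact h
  set r₁ := u₁ * m with hr₁def
  have hr₁0 : 0 < r₁ := Nat.mul_pos hu₁0 hm
  have hrr₁ : u * m = g * r₁ := by rw [hu₁, hr₁def]; ring
  have hcop : Nat.Coprime z₁ r₁ := by
    have hc := Nat.coprime_div_gcd_div_gcd (show 0 < Nat.gcd z (u * m) from hg0)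
    have e1 : z / Nat.gcd z (u * m) = z₁ := by
      rw [← hgdef, hz₁]; exact Nat.mul_div_cancel_left z₁ hg0
    have e2 : u * m / Nat.gcd z (u * m) = r₁ := by
      rw [← hgdef, hrr₁]; exact Nat.mul_div_cancel_left r₁ hg0
    rwa [e1, e2] at hc
  -- Nc as a function of c
  set Nc : ℕ → ℕ := fun c => ((range (u * m)).filter (fun A =>
      dc m k (A / u) (((A + (u * m - c)) % (u * m)) / u))).card with hNc
  -- Step 1: reduce to a sum of Nc over multiples
  have step1 : (((range (u * m)) ×ˢ (range (u * m))).filter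
      (fun p => dc m k (((p.1 * x + p.2) % (u * m)) / u)
        (((p.1 * x' + p.2) % (u * m)) / u))).card
      = ∑ a ∈ range (u * m), Nc ((a * z) % (u * m)) := by
    rw [Finset.card_filter, Finset.sum_product]
    refine Finset.sum_congr rfl (fun a _ => ?_)
    have hb : ∀ b ∈ range (u * m),
        (if dc m k (((a * x + b) % (u * m)) / u) (((a * x' + b) % (u * m)) / u)
          then 1 else 0)
        = (if dc m k (((a * x + b) % (u * m)) / u)
            ((((a * x + b) % (u * m) + (u * m - (a * z) % (u * m))) % (u * m)) / u)
          then (1:ℕ) else 0) := by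
      intro b _
      rw [shift_eq (u * m) a x x' b hr0 (le_of_lt hx')]
    rw [Finset.sum_congr rfl hb, ← Finset.card_filter]
    exact card_mod_shift (u * m) (a * x)
      (fun A => dc m k (A / u) (((A + (u * m - (a * z) % (u * m))) % (u * m)) / u))
  rw [step1]
  -- Step 2: split over blocks
  have step2 : ∑ a ∈ range (u * m), Nc ((a * z) % (u * m))
      = ∑ j ∈ range g, ∑ i ∈ range r₁, Nc (((i + j * r₁) * z) % (u * m)) := by
    rw [show range (u * m) = range (g * r₁) from by rw [hrr₁]]
    exact sum_range_mul g r₁ _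
  have step3 : ∀ j i : ℕ, ((i + j * r₁) * z) % (u * m) = (i * z) % (u * m) := by
    intro j i
    have h : (i + j * r₁) * z = i * z + (u * m) * (j * z₁) := by
      rw [hrr₁, hz₁]; ring
    rw [h, Nat.add_mul_mod_self_left]
  have step4 : ∀ i : ℕ, (i * z) % (u * m) = g * ((i * z₁) % r₁) := by
    intro i
    rw [hz₁, hrr₁, show i * (g * z₁) = g * (i * z₁) from by ring]
    exact Nat.mul_mod_mul_left g _ _
  -- Step 3: bijection from coprimality
  have step5 : ∑ i ∈ range r₁, Nc (g * ((i * z₁) % r₁)) = ∑ c ∈ range r₁, Nc (g * c) := by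
    have hinj : ∀ i1 ∈ range r₁, ∀ i2 ∈ range r₁,
        (i1 * z₁) % r₁ = (i2 * z₁) % r₁ → i1 = i2 := by
      intro i1 h1 i2 h2 hEq
      rw [mem_range] at h1 h2
      have hmod : z₁ * i1 ≡ z₁ * i2 [MOD r₁] := by
        show (z₁ * i1) % r₁ = (z₁ * i2) % r₁
        rw [mul_comm z₁ i1, mul_comm z₁ i2]; exact hEq
      have := Nat.ModEq.cancel_left_of_coprime
        (by rw [Nat.gcd_comm]; exact hcop) hmod
      have h3 : i1 % r₁ = i2 % r₁ := this
      rwa [Nat.mod_eq_of_lt h1, Nat.mod_eq_of_lt h2] at h3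
    have himg : (range r₁).image (fun i => (i * z₁) % r₁) = range r₁ := by
      apply Finset.eq_of_subset_of_card_le
      · intro t ht
        simp only [mem_image, mem_range] at *
        obtain ⟨i, _, rfl⟩ := ht
        exact Nat.mod_lt _ hr₁0
      · rw [Finset.card_image_of_injOn]
        intro i1 h1 i2 h2 h3
        exact hinj i1 (by simpa using h1) i2 (by simpa using h2) h3
    calc ∑ i ∈ range r₁, Nc (g * ((i * z₁) % r₁))
        = ∑ c ∈ (range r₁).image (fun i => (i * z₁) % r₁), Nc (g * c) :=
          (Finset.sum_image (f := fun c => Nc (g * c)) hinj).symm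
      _ = ∑ c ∈ range r₁, Nc (g * c) := by rw [himg]
  -- Step 4: reindex c and evaluate Nc
  have step6 : ∑ c ∈ range r₁, Nc (g * c)
      = ∑ q ∈ range m, ∑ s₁ ∈ range u₁, Nc (g * (s₁ + q * u₁)) := by
    rw [show range r₁ = range (m * u₁) from by rw [hr₁def, mul_comm]]
    exact sum_range_mul m u₁ _
  set E1f : ℕ → ℕ := fun q => if q < k ∨ (m - q) % m < k then 1 else 0 with hE1f
  set E2f : ℕ → ℕ :=
    fun q => if (q + 1) % m < k ∨ (m - (q + 1) % m) % m < k then 1 else 0 with hE2f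
  have step7 : ∀ q ∈ range m, ∀ s₁ ∈ range u₁,
      Nc (g * (s₁ + q * u₁)) = m * ((u - g * s₁) * E1f q + (g * s₁) * E2f q) := by
    intro q hq s₁ hs₁
    rw [mem_range] at hq hs₁
    have hgs : g * s₁ < u := by
      have h1 : g * (s₁ + 1) ≤ g * u₁ := Nat.mul_le_mul_left g hs₁
      have h2 : g * (s₁ + 1) = g * s₁ + g := by ring
      omega
    have harg : g * (s₁ + q * u₁) = q * u + g * s₁ := by rw [hu₁]; ring
    rw [harg, hNc]
    simp only [hE1f, hE2f]
    exact Nc_eval u m k q (g * s₁) hu hm hq hgs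
  have hA := E1_sum_le m k hk hkm
  have hB := E2_sum_le m k hm hk hkm
  have hTA : ∑ q ∈ range m, E1f q ≤ 2 * k - 1 := by simp only [hE1f]; exact hA
  have hTB : ∑ q ∈ range m, E2f q ≤ 2 * k - 1 := by simp only [hE2f]; exact hB
  rw [step2]
  calc ∑ j ∈ range g, ∑ i ∈ range r₁, Nc (((i + j * r₁) * z) % (u * m))
      = ∑ j ∈ range g, ∑ c ∈ range r₁, Nc (g * c) := by
        refine Finset.sum_congr rfl (fun j _ => ?_)
        calc ∑ i ∈ range r₁, Nc (((i + j * r₁) * z) % (u * m))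
            = ∑ i ∈ range r₁, Nc (g * ((i * z₁) % r₁)) := by
              refine Finset.sum_congr rfl (fun i _ => ?_)
              rw [step3 j i, step4 i]
          _ = ∑ c ∈ range r₁, Nc (g * c) := step5
    _ = g * ∑ c ∈ range r₁, Nc (g * c) := by
        rw [Finset.sum_const, Finset.card_range, smul_eq_mul]
    _ ≤ g * (m * ((2 * k - 1) * (u * u₁))) := by
        apply Nat.mul_le_mul_left
        rw [step6, Finset.sum_congr rfl
          (fun q hq => Finset.sum_congr rfl (fun s₁ hs₁ => step7 q hq s₁ hs₁))]
        have expand : ∑ q ∈ range m, ∑ s₁ ∈ range u₁,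
            m * ((u - g * s₁) * E1f q + (g * s₁) * E2f q)
            = m * ((∑ q ∈ range m, E1f q) * (∑ s₁ ∈ range u₁, (u - g * s₁))
                + (∑ q ∈ range m, E2f q) * (∑ s₁ ∈ range u₁, g * s₁)) := by
          calc ∑ q ∈ range m, ∑ s₁ ∈ range u₁,
              m * ((u - g * s₁) * E1f q + (g * s₁) * E2f q)
              = ∑ q ∈ range m, m * ((∑ s₁ ∈ range u₁, (u - g * s₁)) * E1f q
                  + (∑ s₁ ∈ range u₁, g * s₁) * E2f q) := by
                refine Finset.sum_congr rfl (fun q _ => ?_)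
                rw [← Finset.mul_sum]
                congr 1
                rw [Finset.sum_add_distrib, ← Finset.sum_mul, ← Finset.sum_mul]
            _ = m * ∑ q ∈ range m, ((∑ s₁ ∈ range u₁, (u - g * s₁)) * E1f q
                  + (∑ s₁ ∈ range u₁, g * s₁) * E2f q) := by rw [← Finset.mul_sum]
            _ = m * ((∑ q ∈ range m, E1f q) * (∑ s₁ ∈ range u₁, (u - g * s₁))
                + (∑ q ∈ range m, E2f q) * (∑ s₁ ∈ range u₁, g * s₁)) := by
                rw [Finset.sum_add_distrib, ← Finset.mul_sum, ← Finset.mul_sum]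
                ring
        rw [expand]
        apply Nat.mul_le_mul_left
        calc (∑ q ∈ range m, E1f q) * (∑ s₁ ∈ range u₁, (u - g * s₁))
              + (∑ q ∈ range m, E2f q) * (∑ s₁ ∈ range u₁, g * s₁)
            ≤ (2 * k - 1) * (∑ s₁ ∈ range u₁, (u - g * s₁))
              + (2 * k - 1) * (∑ s₁ ∈ range u₁, g * s₁) :=
              Nat.add_le_add (Nat.mul_le_mul_right _ hTA) (Nat.mul_le_mul_right _ hTB)
          _ = (2 * k - 1) * (∑ s₁ ∈ range u₁, ((u - g * s₁) + g * s₁)) := by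
              rw [Finset.sum_add_distrib]; ring
          _ = (2 * k - 1) * (u * u₁) := by
              have hc : ∀ s₁ ∈ range u₁, (u - g * s₁) + g * s₁ = u := by
                intro s₁ hs₁
                rw [mem_range] at hs₁
                have h1 : g * (s₁ + 1) ≤ g * u₁ := Nat.mul_le_mul_left g hs₁
                have h2 : g * (s₁ + 1) = g * s₁ + g := by ring
                omega
              rw [Finset.sum_congr rfl hc, Finset.sum_const, Finset.card_range,
                smul_eq_mul, mul_comm u₁ u]
    _ = (2 * k - 1) * (u * u * m) := by rw [hu₁]; ring



/-- Window collision-freeness for the Dietzfelbinger family: if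
`k²·|S|² ≤ m`, then for at least half of the pairs `(a,b)` no two distinct
elements of `S` land in a common cyclic window of length `k` modulo `m`. -/
theorem stmt_5 (u m k : ℕ) (hu : ∃ i, u = 2 ^ i) (hm : ∃ j, m = 2 ^ j) (hmu : m < u)
    (hk : 0 < k) (S : Finset ℕ) (hSu : ∀ x ∈ S, x < u) (hS : k ^ 2 * S.card ^ 2 ≤ m) :
    (((Finset.range (u * m)) ×ˢ (Finset.range (u * m))).filter
      (fun p => ∃ y < m, 1 < (S.filter (fun x => ∃ j < k,
        ((p.1 * x + p.2) % (u * m)) / u = (y + j) % m)).card)).card * 2 ≤ (u * m) ^ 2 := by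
  obtain ⟨i0, hui⟩ := hu
  obtain ⟨j0, hmj⟩ := hm
  have hm0 : 0 < m := by rw [hmj]; positivity
  have hu0 : 0 < u := lt_trans hm0 hmu
  by_cases hS1 : S.card ≤ 1
  · have hempty : (((Finset.range (u * m)) ×ˢ (Finset.range (u * m))).filter
      (fun p => ∃ y < m, 1 < (S.filter (fun x => ∃ j < k,
        ((p.1 * x + p.2) % (u * m)) / u = (y + j) % m)).card)) = ∅ := by
      apply Finset.filter_false_of_mem
      rintro p hp ⟨y, hy, hcard⟩
      have := Finset.card_filter_le S (fun x => ∃ j < k,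
        ((p.1 * x + p.2) % (u * m)) / u = (y + j) % m)
      omega
    rw [hempty]
    simp
  push_neg at hS1
  have hn2 : 2 ≤ S.card := hS1
  have hkm : k ≤ m := by
    have h1 : k ≤ k ^ 2 := by
      rw [pow_two]
      exact Nat.le_mul_of_pos_left k hk
    have h2 : k ^ 2 ≤ k ^ 2 * S.card ^ 2 := by
      apply Nat.le_mul_of_pos_right
      positivity
    omega
  set P := (S ×ˢ S).filter (fun q : ℕ × ℕ => q.2 < q.1) with hP
  have hsub : (((Finset.range (u * m)) ×ˢ (Finset.range (u * m))).filter
      (fun p => ∃ y < m, 1 < (S.filter (fun x => ∃ j < k,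
        ((p.1 * x + p.2) % (u * m)) / u = (y + j) % m)).card))
      ⊆ P.biUnion (fun q => ((range (u * m)) ×ˢ (range (u * m))).filter
          (fun p => dc m k (((p.1 * q.1 + p.2) % (u * m)) / u)
            (((p.1 * q.2 + p.2) % (u * m)) / u))) := by
    intro p hp
    rw [Finset.mem_filter] at hp
    obtain ⟨hpmem, y, hy, hcard⟩ := hp
    obtain ⟨x₁, hx₁, x₂, hx₂, hne⟩ := Finset.one_lt_card.mp hcard
    rw [Finset.mem_filter] at hx₁ hx₂
    obtain ⟨hx₁S, j₁, hj₁, he₁⟩ := hx₁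
    obtain ⟨hx₂S, j₂, hj₂, he₂⟩ := hx₂
    rw [Finset.mem_biUnion]
    rcases lt_or_gt_of_ne hne with hlt | hlt
    · refine ⟨(x₂, x₁), ?_, ?_⟩
      · rw [hP, Finset.mem_filter, Finset.mem_product]
        exact ⟨⟨hx₂S, hx₁S⟩, hlt⟩
      · rw [Finset.mem_filter]
        exact ⟨hpmem, window_dc m k y j₂ j₁ _ _ hm0 hkm hj₂ hj₁ he₂ he₁⟩
    · refine ⟨(x₁, x₂), ?_, ?_⟩
      · rw [hP, Finset.mem_filter, Finset.mem_product]
        exact ⟨⟨hx₁S, hx₂S⟩, hlt⟩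
      · rw [Finset.mem_filter]
        exact ⟨hpmem, window_dc m k y j₁ j₂ _ _ hm0 hkm hj₁ hj₂ he₁ he₂⟩
  have hbound : (((Finset.range (u * m)) ×ˢ (Finset.range (u * m))).filter
      (fun p => ∃ y < m, 1 < (S.filter (fun x => ∃ j < k,
        ((p.1 * x + p.2) % (u * m)) / u = (y + j) % m)).card)).card
      ≤ P.card * ((2 * k - 1) * (u * u * m)) := by
    calc _ ≤ (P.biUnion (fun q => ((range (u * m)) ×ˢ (range (u * m))).filter
          (fun p => dc m k (((p.1 * q.1 + p.2) % (u * m)) / u)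
            (((p.1 * q.2 + p.2) % (u * m)) / u)))).card := Finset.card_le_card hsub
      _ ≤ ∑ q ∈ P, (((range (u * m)) ×ˢ (range (u * m))).filter
          (fun p => dc m k (((p.1 * q.1 + p.2) % (u * m)) / u)
            (((p.1 * q.2 + p.2) % (u * m)) / u))).card := Finset.card_biUnion_le
      _ ≤ ∑ _q ∈ P, (2 * k - 1) * (u * u * m) := by
          apply Finset.sum_le_sum
          intro q hq
          rw [hP, Finset.mem_filter, Finset.mem_product] at hq
          obtain ⟨⟨hq1, hq2⟩, hlt⟩ := hq
          exact pair_count u m k i0 j0 hui hmj hm0 hk hkm q.1 q.2 (hSu _ hq1) hlt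
      _ = P.card * ((2 * k - 1) * (u * u * m)) := by
          rw [Finset.sum_const, smul_eq_mul]
  have hPcard : P.card * 2 ≤ S.card * S.card := by
    set Q := (S ×ˢ S).filter (fun q : ℕ × ℕ => q.1 < q.2) with hQ
    have hswap : P.card = Q.card := by
      apply Finset.card_nbij' (fun q => (q.2, q.1)) (fun q => (q.2, q.1))
      · intro q hq
        rw [hP, Finset.mem_coe, Finset.mem_filter, Finset.mem_product] at hq
        rw [hQ, Finset.mem_coe, Finset.mem_filter, Finset.mem_product]
        exact ⟨⟨hq.1.2, hq.1.1⟩, hq.2⟩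
      · intro q hq
        rw [hQ, Finset.mem_coe, Finset.mem_filter, Finset.mem_product] at hq
        rw [hP, Finset.mem_coe, Finset.mem_filter, Finset.mem_product]
        exact ⟨⟨hq.1.2, hq.1.1⟩, hq.2⟩
      · intro q _; rfl
      · intro q _; rfl
    have hdisj : Disjoint P Q := by
      rw [Finset.disjoint_left]
      intro q hq1 hq2
      rw [hP, Finset.mem_filter] at hq1
      rw [hQ, Finset.mem_filter] at hq2
      omega
    calc P.card * 2 = P.card + Q.card := by omega
      _ = (P ∪ Q).card := (Finset.card_union_of_disjoint hdisj).symm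
      _ ≤ (S ×ˢ S).card := Finset.card_le_card
          (Finset.union_subset (Finset.filter_subset _ _) (Finset.filter_subset _ _))
      _ = S.card * S.card := Finset.card_product _ _
  have hK : 2 * k - 1 ≤ k ^ 2 := by
    have hz : 2 * (k : ℤ) ≤ (k : ℤ) * k + 1 := by nlinarith [sq_nonneg ((k : ℤ) - 1)]
    have hn : 2 * k ≤ k * k + 1 := by exact_mod_cast hz
    rw [pow_two]
    omega
  calc (((Finset.range (u * m)) ×ˢ (Finset.range (u * m))).filter
      (fun p => ∃ y < m, 1 < (S.filter (fun x => ∃ j < k,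
        ((p.1 * x + p.2) % (u * m)) / u = (y + j) % m)).card)).card * 2
      ≤ (P.card * ((2 * k - 1) * (u * u * m))) * 2 := Nat.mul_le_mul_right _ hbound
    _ = (P.card * 2) * ((2 * k - 1) * (u * u * m)) := by ring
    _ ≤ (S.card * S.card) * ((2 * k - 1) * (u * u * m)) := Nat.mul_le_mul_right _ hPcard
    _ ≤ (S.card * S.card) * (k ^ 2 * (u * u * m)) :=
        Nat.mul_le_mul_left _ (Nat.mul_le_mul_right _ hK)
    _ = (k ^ 2 * S.card ^ 2) * (u * u * m) := by ring
    _ ≤ m * (u * u * m) := Nat.mul_le_mul_right _ hS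
    _ = (u * m) ^ 2 := by ring
end

section
/- Let u and m be positive integers and set r = u·m. For all natural numbers a, x1, x2, there exists κ ∈ {0,1} such that ⌊((a·(x1+x2)) mod r)/u⌋ ≡ ⌊((a·x1) mod r)/u⌋ + ⌊((a·x2) mod r)/u⌋ + κ (mod m). In other words, the offset-free hash function ĥ(x) = ⌊((a·x) mod r)/u⌋ is almost linear modulo m: ĥ(x1+x2) differs from ĥ(x1)+ĥ(x2) modulo m by an additive error κ ∈ {0,1}. -/
/-- The offset-free Dietzfelbinger hash `ĥ(x) = ⌊((a·x) mod (u·m)) / u⌋` is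
almost linear modulo `m`: `ĥ(x1 + x2) ≡ ĥ(x1) + ĥ(x2) + κ (mod m)` for some
`κ ∈ {0, 1}`. -/
theorem stmt_6 (u m : ℕ) (hu : 0 < u) (hm : 0 < m) (a x1 x2 : ℕ) :
    ∃ κ ≤ 1, Nat.ModEq m ((a * (x1 + x2)) % (u * m) / u)
      ((a * x1) % (u * m) / u + (a * x2) % (u * m) / u + κ) := by
  set r := u * m with hr
  have hru : 0 < r := Nat.mul_pos hu hm
  set s1 := (a * x1) % r with hs1
  set s2 := (a * x2) % r with hs2
  obtain ⟨k, hk1, hkdef⟩ : ∃ k ≤ 1, (if u ≤ s1 % u + s2 % u then 1 else 0) = k := by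
    split <;> exact ⟨_, by norm_num, rfl⟩
  have hadd : (s1 + s2) / u = s1 / u + s2 / u + k := by
    rw [← hkdef]; exact Nat.add_div hu
  refine ⟨k, hk1, ?_⟩
  have key : (a * (x1 + x2)) % r = (s1 + s2) % r := by
    rw [Nat.mul_add, Nat.add_mod]
  rw [key]
  rcases lt_or_ge (s1 + s2) r with h | h
  · rw [Nat.mod_eq_of_lt h, hadd]
  · have h1 : s1 < r := Nat.mod_lt _ hru
    have h2 : s2 < r := Nat.mod_lt _ hru
    have hmod : (s1 + s2) % r = s1 + s2 - r := by
      rw [Nat.mod_eq_sub_mod h, Nat.mod_eq_of_lt (by omega)]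
    rw [hmod]
    have hsub : (s1 + s2 - r) / u = (s1 + s2) / u - m := by
      rw [hr, Nat.sub_mul_div _ _ _]
    have hle : m ≤ (s1 + s2) / u := by
      rw [Nat.le_div_iff_mul_le hu]
      calc m * u = r := by rw [hr, Nat.mul_comm]
        _ ≤ s1 + s2 := h
    rw [hsub]
    have h3 : Nat.ModEq m ((s1 + s2) / u - m) ((s1 + s2) / u) := by
      conv_rhs => rw [← Nat.sub_add_cancel hle]
      exact (Nat.add_mod_right _ _).symm
    exact h3.trans (by rw [hadd])
end
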